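/- Let p > 1 and 1 < r < p. The function F(s) := ∫_s^∞ dt/(t^p + t^r) is a strictly decreasing continuous bijection from (0,∞) onto (0,∞); let F⁻¹ denote its inverse. Then, as σ → 0+, F⁻¹(σ) = ((p−1)σ)^{−1/(p−1)} − (1/(2p−r−1))·((p−1)σ)^{(p−r−1)/(p−1)} + O( σ^{(2(p−r)−1)/(p−1)} ). -/

import Mathlib

open Real Set MeasureTheory Filter
open scoped ENNReal

section AuxFinv

variable {p r : ℝ} {F : ℝ → ℝ}

lemma taylor1 (q : ℝ) : ∃ K : ℝ, 0 < K ∧ ∀ ε : ℝ, |ε| ≤ 1/2 → |(1+ε)^q - 1| ≤ K * |ε| := by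
  set M : ℝ := |q| * 2 ^ |q-1| with hM
  refine ⟨M + 1, by positivity, fun ε hε => ?_⟩
  have hconv : Convex ℝ (uIcc (0:ℝ) ε) := convex_uIcc _ _
  have hmem : ∀ x ∈ uIcc (0:ℝ) ε, |x| ≤ 1/2 := by
    intro x hx
    rw [uIcc_eq_union] at hx
    rcases hx with hx | hx <;> rw [abs_le] <;>
      [ exact ⟨by linarith [hx.1, abs_nonneg ε], le_trans hx.2 (le_trans (le_abs_self ε) hε)⟩ ;
        exact ⟨le_trans (by linarith [neg_le_abs ε, hε] : -(1/2:ℝ) ≤ ε) hx.1, by linarith [hx.2]⟩ ]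
  have hderiv : ∀ x ∈ uIcc (0:ℝ) ε,
      HasDerivWithinAt (fun y => (1+y)^q) (q * (1+x)^(q-1)) (uIcc (0:ℝ) ε) x := by
    intro x hx
    have hx2 := hmem x hx
    have hx3 : (0:ℝ) < 1 + x := by rw [abs_le] at hx2; linarith [hx2.1]
    have h1 : HasDerivAt (fun y : ℝ => 1 + y) 1 x := by
      simpa using (hasDerivAt_id x).const_add (1:ℝ)
    have h2 := (Real.hasDerivAt_rpow_const (x := 1 + x) (p := q) (Or.inl hx3.ne')).comp x h1
    simpa [Function.comp_def] using h2.hasDerivWithinAt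
  have hbound : ∀ x ∈ uIcc (0:ℝ) ε, ‖q * (1+x)^(q-1)‖ ≤ M := by
    intro x hx
    have hx2 := hmem x hx
    rw [abs_le] at hx2
    have hx3 : (0:ℝ) < 1 + x := by linarith [hx2.1]
    have hx4 : (1:ℝ) + x ≤ 2 := by linarith [hx2.2]
    have hb : (1+x)^(q-1) ≤ 2 ^ |q-1| := by
      rcases le_or_gt 0 (q-1) with h | h
      · calc (1+x)^(q-1) ≤ 2 ^ (q-1) := Real.rpow_le_rpow hx3.le hx4 h
          _ ≤ 2 ^ |q-1| := Real.rpow_le_rpow_of_exponent_le one_le_two (le_abs_self _)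
      · have h12 : (1:ℝ)/2 ≤ 1 + x := by linarith [hx2.1]
        calc (1+x)^(q-1) ≤ ((1:ℝ)/2) ^ (q-1) :=
              Real.rpow_le_rpow_of_nonpos (by norm_num) h12 h.le
          _ = 2 ^ (-(q-1)) := by
              rw [Real.rpow_neg (by norm_num), one_div, Real.inv_rpow (by norm_num)]
          _ = 2 ^ |q-1| := by rw [abs_of_neg h]
    have hbpos : (0:ℝ) ≤ (1+x)^(q-1) := Real.rpow_nonneg hx3.le _
    rw [norm_mul, Real.norm_eq_abs, Real.norm_eq_abs, abs_of_nonneg hbpos, hM]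
    exact mul_le_mul_of_nonneg_left hb (abs_nonneg q)
  have := hconv.norm_image_sub_le_of_norm_hasDerivWithin_le hderiv hbound
    (left_mem_uIcc) (right_mem_uIcc)
  simp only [add_zero, Real.one_rpow, sub_zero, Real.norm_eq_abs] at this
  calc |(1+ε)^q - 1| ≤ M * |ε| := this
    _ ≤ (M+1) * |ε| := by nlinarith [abs_nonneg ε]

lemma taylor2 (q : ℝ) : ∃ K : ℝ, 0 < K ∧ ∀ ε : ℝ, |ε| ≤ 1/2 → |(1+ε)^q - 1 - q*ε| ≤ K * ε^2 := by
  obtain ⟨K', hK', hK'b⟩ := taylor1 (q-1)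
  refine ⟨|q| * K' + 1, by positivity, fun ε hε => ?_⟩
  have hconv : Convex ℝ (uIcc (0:ℝ) ε) := convex_uIcc _ _
  have hmem : ∀ x ∈ uIcc (0:ℝ) ε, |x| ≤ |ε| := by
    intro x hx
    rw [uIcc_eq_union] at hx
    rcases hx with hx | hx <;> rw [abs_le]
    · exact ⟨by linarith [hx.1, abs_nonneg ε], le_trans hx.2 (le_abs_self ε)⟩
    · exact ⟨le_trans (neg_abs_le ε) hx.1, by linarith [hx.2, abs_nonneg ε]⟩
  have hderiv : ∀ x ∈ uIcc (0:ℝ) ε,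
      HasDerivWithinAt (fun y => (1+y)^q - 1 - q*y) (q * ((1+x)^(q-1) - 1)) (uIcc (0:ℝ) ε) x := by
    intro x hx
    have hx2 : |x| ≤ 1/2 := le_trans (hmem x hx) hε
    have hx3 : (0:ℝ) < 1 + x := by rw [abs_le] at hx2; linarith [hx2.1]
    have h1 : HasDerivAt (fun y : ℝ => 1 + y) 1 x := by
      simpa using (hasDerivAt_id x).const_add (1:ℝ)
    have h2 := (Real.hasDerivAt_rpow_const (x := 1 + x) (p := q) (Or.inl hx3.ne')).comp x h1
    have h3 : HasDerivAt (fun y : ℝ => (1+y)^q - 1 - q*y) (q*(1+x)^(q-1)*1 - 0 - q) x := by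
      exact (h2.sub_const 1).sub ((hasDerivAt_id x).const_mul q) |>.congr_deriv (by ring)
    have h4 : q*(1+x)^(q-1)*1 - 0 - q = q * ((1+x)^(q-1) - 1) := by ring
    rw [h4] at h3
    exact h3.hasDerivWithinAt
  have hbound : ∀ x ∈ uIcc (0:ℝ) ε, ‖q * ((1+x)^(q-1) - 1)‖ ≤ |q| * K' * |ε| := by
    intro x hx
    have hx2 : |x| ≤ 1/2 := le_trans (hmem x hx) hε
    rw [norm_mul, Real.norm_eq_abs, Real.norm_eq_abs, mul_assoc]
    refine mul_le_mul_of_nonneg_left ?_ (abs_nonneg q)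
    calc |(1+x)^(q-1) - 1| ≤ K' * |x| := hK'b x hx2
      _ ≤ K' * |ε| := mul_le_mul_of_nonneg_left (hmem x hx) hK'.le
  have := hconv.norm_image_sub_le_of_norm_hasDerivWithin_le hderiv hbound
    (left_mem_uIcc) (right_mem_uIcc)
  simp only [add_zero, Real.one_rpow, mul_zero, sub_zero, Real.norm_eq_abs] at this
  have h5 : |q| * K' * |ε| * |ε| = |q| * K' * ε^2 := by
    rw [mul_assoc, abs_mul_abs_self, sq]
  calc |(1+ε)^q - 1 - q*ε| ≤ |q| * K' * |ε| * |ε| := by simpa using this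
    _ = |q| * K' * ε^2 := h5
    _ ≤ (|q| * K' + 1) * ε^2 := by nlinarith [sq_nonneg ε]

lemma alg_lb {A B : ℝ} (hA : 0 < A) (hB : 0 < B) : A⁻¹ - B/(A*A) ≤ (A+B)⁻¹ := by
  rw [inv_eq_one_div A, inv_eq_one_div (A+B),
    div_sub_div _ _ hA.ne' (mul_pos hA hA).ne',
    div_le_div_iff₀ (by positivity) (by positivity)]
  nlinarith [mul_pos hA (mul_pos hB hB)]

lemma alg_ub {A B : ℝ} (hA : 0 < A) (hB : 0 < B) :
    (A+B)⁻¹ ≤ A⁻¹ - B/(A*A) + B*B/(A*(A*A)) := by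
  rw [inv_eq_one_div A, inv_eq_one_div (A+B), div_sub_div _ _ hA.ne' (mul_pos hA hA).ne',
    ← add_div, div_le_div_iff₀ (by positivity) (by positivity)]
  nlinarith [mul_pos (mul_pos hB hB) hB]

lemma g_pos (hp : 0 < p) (hr : 0 < r) {t : ℝ} (ht : 0 < t) : 0 < (t ^ p + t ^ r)⁻¹ := by
  have := Real.rpow_pos_of_pos ht p
  have := Real.rpow_pos_of_pos ht r
  positivity

lemma rpow_r2p {t : ℝ} (ht : 0 < t) : t ^ (r - 2*p) = t ^ r / (t^p * t^p) := by
  rw [show r - 2*p = r + (-p) + (-p) by ring, Real.rpow_add ht, Real.rpow_add ht,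
    Real.rpow_neg ht.le]
  field_simp

lemma rpow_2r3p {t : ℝ} (ht : 0 < t) :
    t ^ (2*r - 3*p) = t ^ r * t ^ r / (t^p * (t^p * t^p)) := by
  rw [show 2*r - 3*p = r + r + (-p) + (-p) + (-p) by ring, Real.rpow_add ht, Real.rpow_add ht,
    Real.rpow_add ht, Real.rpow_add ht, Real.rpow_neg ht.le]
  field_simp

lemma g_cont : ContinuousOn (fun t : ℝ => (t ^ p + t ^ r)⁻¹) (Ioi 0) := by
  intro t ht
  have ht' : (0:ℝ) < t := ht
  have h1 : ContinuousAt (fun t : ℝ => t ^ p + t ^ r) t :=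
    ((Real.continuousAt_rpow_const t p (Or.inl ht'.ne')).add
      (Real.continuousAt_rpow_const t r (Or.inl ht'.ne')))
  have h2 : (0:ℝ) < t ^ p + t ^ r := by
    have := Real.rpow_pos_of_pos ht' p; have := Real.rpow_pos_of_pos ht' r; linarith
  exact (h1.inv₀ h2.ne').continuousWithinAt

lemma g_le {t : ℝ} (ht : 0 < t) : (t ^ p + t ^ r)⁻¹ ≤ t ^ (-p) := by
  rw [Real.rpow_neg ht.le]
  have h1 : (0:ℝ) < t ^ p := Real.rpow_pos_of_pos ht p
  have h2 : (0:ℝ) < t ^ r := Real.rpow_pos_of_pos ht r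
  exact inv_anti₀ h1 (by linarith)

lemma g_lb {t : ℝ} (ht : 0 < t) : t ^ (-p) - t ^ (r - 2*p) ≤ (t ^ p + t ^ r)⁻¹ := by
  have h1 : (0:ℝ) < t ^ p := Real.rpow_pos_of_pos ht p
  have h2 : (0:ℝ) < t ^ r := Real.rpow_pos_of_pos ht r
  rw [Real.rpow_neg ht.le, rpow_r2p ht]
  exact alg_lb h1 h2

lemma g_ub {t : ℝ} (ht : 0 < t) :
    (t ^ p + t ^ r)⁻¹ ≤ t ^ (-p) - t ^ (r - 2*p) + t ^ (2*r - 3*p) := by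
  have h1 : (0:ℝ) < t ^ p := Real.rpow_pos_of_pos ht p
  have h2 : (0:ℝ) < t ^ r := Real.rpow_pos_of_pos ht r
  rw [Real.rpow_neg ht.le, rpow_r2p ht, rpow_2r3p ht]
  exact alg_ub h1 h2

lemma g_integrable (hp : 1 < p) (hr : 0 < r) {s : ℝ} (hs : 0 < s) :
    IntegrableOn (fun t : ℝ => (t ^ p + t ^ r)⁻¹) (Ioi s) := by
  have hmeas : AEStronglyMeasurable (fun t : ℝ => (t ^ p + t ^ r)⁻¹)
      (volume.restrict (Ioi s)) := by
    refine ContinuousOn.aestronglyMeasurable (g_cont.mono ?_) measurableSet_Ioi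
    exact Ioi_subset_Ioi hs.le
  refine Integrable.mono' (integrableOn_Ioi_rpow_of_lt (a := -p) (by linarith) hs) hmeas ?_
  filter_upwards [ae_restrict_mem measurableSet_Ioi] with t ht
  have ht' : 0 < t := hs.trans ht
  rw [Real.norm_eq_abs, abs_of_pos (g_pos (by linarith) hr ht')]
  exact g_le ht'

lemma integral_rpow_Ioi {a : ℝ} (ha : a < -1) {s : ℝ} (hs : 0 < s) :
    ∫ t in Ioi s, t ^ a = s ^ (a+1) / (-(a+1)) := by
  rw [integral_Ioi_rpow_of_lt ha hs, div_neg, neg_div]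

lemma exp1 (hp : 1 < p) : -p < -1 := by linarith
lemma exp2 (hp : 1 < p) (hrp : r < p) : r - 2*p < -1 := by linarith
lemma exp3 (hp : 1 < p) (hrp : r < p) : 2*r - 3*p < -1 := by linarith

lemma F_ub0 (hp : 1 < p) (hr : 0 < r)
    (hF : ∀ s : ℝ, F s = ∫ t in Set.Ioi s, (t ^ p + t ^ r)⁻¹) {s : ℝ} (hs : 0 < s) :
    F s ≤ s ^ (1-p) / (p-1) := by
  rw [hF]
  have h1 : IntegrableOn (fun t : ℝ => t ^ (-p)) (Ioi s) :=
    integrableOn_Ioi_rpow_of_lt (exp1 hp) hs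
  have mono := setIntegral_mono_on (g_integrable hp hr hs) h1 measurableSet_Ioi
    (fun t ht => g_le (hs.trans ht))
  rwa [integral_rpow_Ioi (exp1 hp) hs, show -(-p+1) = p-1 by ring,
    show -p+1 = 1-p by ring] at mono

lemma F_lb (hp : 1 < p) (hr : 0 < r) (hrp : r < p)
    (hF : ∀ s : ℝ, F s = ∫ t in Set.Ioi s, (t ^ p + t ^ r)⁻¹) {s : ℝ} (hs : 0 < s) :
    s ^ (1-p) / (p-1) - s ^ (1+r-2*p) / (2*p-r-1) ≤ F s := by
  rw [hF]
  have h1 : IntegrableOn (fun t : ℝ => t ^ (-p)) (Ioi s) :=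
    integrableOn_Ioi_rpow_of_lt (exp1 hp) hs
  have h2 : IntegrableOn (fun t : ℝ => t ^ (r-2*p)) (Ioi s) :=
    integrableOn_Ioi_rpow_of_lt (exp2 hp hrp) hs
  have mono := setIntegral_mono_on (h1.sub h2) (g_integrable hp hr hs) measurableSet_Ioi
    (fun t ht => g_lb (hs.trans ht))
  simp only [Pi.sub_apply] at mono
  rwa [integral_sub h1 h2, integral_rpow_Ioi (exp1 hp) hs,
    integral_rpow_Ioi (exp2 hp hrp) hs, show -(-p+1) = p-1 by ring,
    show -(r-2*p+1) = 2*p-r-1 by ring, show -p+1 = 1-p by ring,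
    show r-2*p+1 = 1+r-2*p by ring] at mono

lemma F_ub (hp : 1 < p) (hr : 0 < r) (hrp : r < p)
    (hF : ∀ s : ℝ, F s = ∫ t in Set.Ioi s, (t ^ p + t ^ r)⁻¹) {s : ℝ} (hs : 0 < s) :
    F s ≤ s ^ (1-p) / (p-1) - s ^ (1+r-2*p) / (2*p-r-1) + s ^ (1+2*r-3*p) / (3*p-2*r-1) := by
  rw [hF]
  have h1 : IntegrableOn (fun t : ℝ => t ^ (-p)) (Ioi s) :=
    integrableOn_Ioi_rpow_of_lt (exp1 hp) hs
  have h2 : IntegrableOn (fun t : ℝ => t ^ (r-2*p)) (Ioi s) :=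
    integrableOn_Ioi_rpow_of_lt (exp2 hp hrp) hs
  have h3 : IntegrableOn (fun t : ℝ => t ^ (2*r-3*p)) (Ioi s) :=
    integrableOn_Ioi_rpow_of_lt (exp3 hp hrp) hs
  have mono := setIntegral_mono_on (g_integrable hp hr hs) ((h1.sub h2).add h3)
    measurableSet_Ioi (fun t ht => g_ub (hs.trans ht))
  have h12 : IntegrableOn (fun t : ℝ => t ^ (-p) - t ^ (r-2*p)) (Ioi s) := h1.sub h2
  simp only [Pi.sub_apply, Pi.add_apply] at mono
  rwa [integral_add h12 h3, integral_sub h1 h2, integral_rpow_Ioi (exp1 hp) hs,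
    integral_rpow_Ioi (exp2 hp hrp) hs, integral_rpow_Ioi (exp3 hp hrp) hs,
    show -(-p+1) = p-1 by ring, show -(r-2*p+1) = 2*p-r-1 by ring,
    show -(2*r-3*p+1) = 3*p-2*r-1 by ring, show -p+1 = 1-p by ring,
    show r-2*p+1 = 1+r-2*p by ring, show 2*r-3*p+1 = 1+2*r-3*p by ring] at mono

lemma F_split (hp : 1 < p) (hr : 0 < r)
    (hF : ∀ s : ℝ, F s = ∫ t in Set.Ioi s, (t ^ p + t ^ r)⁻¹)
    {s₁ s₂ : ℝ} (hs₁ : 0 < s₁) (h12 : s₁ ≤ s₂) :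
    F s₁ = (∫ t in Ioc s₁ s₂, (t ^ p + t ^ r)⁻¹) + F s₂ := by
  rw [hF, hF, ← setIntegral_union (Ioc_disjoint_Ioi le_rfl) measurableSet_Ioi
    ((g_integrable hp hr hs₁).mono_set Ioc_subset_Ioi_self)
    (g_integrable hp hr (hs₁.trans_le h12)), Ioc_union_Ioi_eq_Ioi h12]

lemma F_pos (hp : 1 < p) (hr : 0 < r)
    (hF : ∀ s : ℝ, F s = ∫ t in Set.Ioi s, (t ^ p + t ^ r)⁻¹) {s : ℝ} (hs : 0 < s) :
    0 < F s := by
  rw [hF]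
  rw [setIntegral_pos_iff_support_of_nonneg_ae ?nonneg (g_integrable hp hr hs)]
  case nonneg =>
    filter_upwards [ae_restrict_mem measurableSet_Ioi] with t ht
    exact (g_pos (by linarith) hr (hs.trans ht)).le
  have hsub : Ioi s ⊆ (Function.support fun t : ℝ => (t ^ p + t ^ r)⁻¹) ∩ Ioi s :=
    fun t ht => ⟨(g_pos (by linarith) hr (hs.trans ht)).ne', ht⟩
  have hv : (0:ℝ≥0∞) < volume (Ioi s) := by
    rw [Real.volume_Ioi]; exact ENNReal.zero_lt_top
  exact lt_of_lt_of_le hv (measure_mono hsub)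

lemma int_Ioc_pos (hp : 1 < p) (hr : 0 < r) {s₁ s₂ : ℝ} (hs₁ : 0 < s₁) (h12 : s₁ < s₂) :
    0 < ∫ t in Ioc s₁ s₂, (t ^ p + t ^ r)⁻¹ := by
  rw [setIntegral_pos_iff_support_of_nonneg_ae ?nonneg
    ((g_integrable hp hr hs₁).mono_set Ioc_subset_Ioi_self)]
  case nonneg =>
    filter_upwards [ae_restrict_mem measurableSet_Ioc] with t ht
    exact (g_pos (by linarith) hr (hs₁.trans ht.1)).le
  have hsub : Ioc s₁ s₂ ⊆ (Function.support fun t : ℝ => (t ^ p + t ^ r)⁻¹) ∩ Ioc s₁ s₂ :=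
    fun t ht => ⟨(g_pos (by linarith) hr (hs₁.trans ht.1)).ne', ht⟩
  have hv : (0:ℝ≥0∞) < volume (Ioc s₁ s₂) := by
    rw [Real.volume_Ioc]
    simp [ENNReal.ofReal_pos, h12]
  exact lt_of_lt_of_le hv (measure_mono hsub)

lemma F_anti (hp : 1 < p) (hr : 0 < r)
    (hF : ∀ s : ℝ, F s = ∫ t in Set.Ioi s, (t ^ p + t ^ r)⁻¹) :
    StrictAntiOn F (Ioi 0) := by
  intro s₁ hs₁ s₂ hs₂ h12
  have := F_split hp hr hF (hs₁ : (0:ℝ) < s₁) h12.le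
  have hpos := int_Ioc_pos hp hr (hs₁ : (0:ℝ) < s₁) h12
  linarith

lemma rpow_helper {B s e : ℝ} (hB : 0 ≤ B) (he : 0 < e) (h : B ^ (1/e) ≤ s) : B ≤ s ^ e := by
  have hs : (0:ℝ) ≤ B ^ (1/e) := Real.rpow_nonneg hB _
  calc B = (B ^ (1/e)) ^ e := by
        rw [← Real.rpow_mul hB, one_div, inv_mul_cancel₀ he.ne', Real.rpow_one]
    _ ≤ s ^ e := Real.rpow_le_rpow hs h he.le

/-- Lipschitz-type bound: for `c ≤ u ≤ v`, `|F u - F v| ≤ c^(-p) * (v - u)`. -/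
lemma F_lip (hp : 1 < p) (hr : 0 < r)
    (hF : ∀ s : ℝ, F s = ∫ t in Set.Ioi s, (t ^ p + t ^ r)⁻¹)
    {c u v : ℝ} (hc : 0 < c) (hcu : c ≤ u) (huv : u ≤ v) :
    |F u - F v| ≤ c ^ (-p) * (v - u) := by
  have hu : 0 < u := hc.trans_le hcu
  have hsplit := F_split hp hr hF hu huv
  have hnn : 0 ≤ ∫ t in Ioc u v, (t ^ p + t ^ r)⁻¹ := by
    refine setIntegral_nonneg measurableSet_Ioc (fun t ht => ?_)
    exact (g_pos (by linarith) hr (hu.trans ht.1)).le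
  have hub : (∫ t in Ioc u v, (t ^ p + t ^ r)⁻¹) ≤ c ^ (-p) * (v - u) := by
    have hbd : ∀ t ∈ Ioc u v, (t ^ p + t ^ r)⁻¹ ≤ c ^ (-p) := by
      intro t ht
      have ht' : 0 < t := hu.trans ht.1
      calc (t ^ p + t ^ r)⁻¹ ≤ t ^ (-p) := g_le ht'
        _ ≤ c ^ (-p) := Real.rpow_le_rpow_of_nonpos hc (hcu.trans ht.1.le) (by linarith)
    calc (∫ t in Ioc u v, (t ^ p + t ^ r)⁻¹) ≤ ∫ _t in Ioc u v, c ^ (-p) := by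
          refine setIntegral_mono_on ((g_integrable hp hr hu).mono_set Ioc_subset_Ioi_self)
            (integrableOn_const ?_) measurableSet_Ioc hbd
          rw [Real.volume_Ioc]; exact ENNReal.ofReal_ne_top
      _ = c ^ (-p) * (v - u) := by
          rw [setIntegral_const, measureReal_def, Real.volume_Ioc, smul_eq_mul,
            ENNReal.toReal_ofReal (by linarith)]
          ring
  rw [abs_of_nonneg (by linarith)]
  linarith

lemma F_contOn (hp : 1 < p) (hr : 0 < r)
    (hF : ∀ s : ℝ, F s = ∫ t in Set.Ioi s, (t ^ p + t ^ r)⁻¹) :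
    ContinuousOn F (Ioi 0) := by
  intro s hs
  have hs' : (0:ℝ) < s := hs
  have hlip : LipschitzOnWith ((s/2) ^ (-p)).toNNReal F (Ioi (s/2)) := by
    refine LipschitzOnWith.of_dist_le_mul (fun x hx y hy => ?_)
    have h2 : (0:ℝ) < s/2 := by linarith
    rw [Real.dist_eq, Real.dist_eq]
    rcases le_total x y with h | h
    · calc |F x - F y| ≤ (s/2) ^ (-p) * (y - x) := F_lip hp hr hF h2 (le_of_lt hx) h
        _ = ((s/2) ^ (-p)).toNNReal * |x - y| := by
            rw [Real.coe_toNNReal _ (Real.rpow_nonneg h2.le _), abs_sub_comm,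
              abs_of_nonneg (by linarith)]
    · rw [abs_sub_comm]
      calc |F y - F x| ≤ (s/2) ^ (-p) * (x - y) := F_lip hp hr hF h2 (le_of_lt hy) h
        _ = ((s/2) ^ (-p)).toNNReal * |x - y| := by
            rw [Real.coe_toNNReal _ (Real.rpow_nonneg h2.le _), abs_of_nonneg (by linarith)]
  have hmem : Ioi (s/2) ∈ nhds s := Ioi_mem_nhds (by linarith)
  exact ((hlip.continuousOn.continuousAt hmem)).continuousWithinAt

lemma F_lb_small (hp : 1 < p) (hr : 1 < r) (hrp : r < p)
    (hF : ∀ s : ℝ, F s = ∫ t in Set.Ioi s, (t ^ p + t ^ r)⁻¹)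
    {s : ℝ} (hs : 0 < s) (hs1 : s ≤ 1) :
    (s ^ (1-r) - 1) / (2*(r-1)) ≤ F s := by
  have hsplit := F_split hp (by linarith) hF hs hs1
  have hF1 : 0 < F 1 := F_pos hp (by linarith) hF one_pos
  have key : (s ^ (1-r) - 1) / (2*(r-1)) ≤ ∫ t in Ioc s 1, (t ^ p + t ^ r)⁻¹ := by
    have hpt : ∀ t ∈ Ioc s (1:ℝ), (1/2) * t ^ (-r) ≤ (t ^ p + t ^ r)⁻¹ := by
      intro t ht
      have ht' : 0 < t := hs.trans ht.1
      have htp : t ^ p ≤ t ^ r := Real.rpow_le_rpow_of_exponent_ge ht' ht.2 hrp.le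
      have hrpos : (0:ℝ) < t ^ r := Real.rpow_pos_of_pos ht' r
      have hppos : (0:ℝ) < t ^ p := Real.rpow_pos_of_pos ht' p
      have : (t ^ p + t ^ r)⁻¹ ≥ (t ^ r + t ^ r)⁻¹ :=
        inv_anti₀ (by linarith) (by linarith)
      calc (1/2) * t ^ (-r) = (t ^ r + t ^ r)⁻¹ := by
            rw [Real.rpow_neg ht'.le]
            field_simp
            ring
          _ ≤ (t ^ p + t ^ r)⁻¹ := this
    have hzero : (0:ℝ) ∉ uIcc s 1 := by
      intro h
      rw [mem_uIcc] at h
      rcases h with h | h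
      · exact absurd h.1 (not_le.2 hs)
      · linarith [h.2]
    have hint0 : IntervalIntegrable (fun t : ℝ => t ^ (-r)) volume s 1 :=
      intervalIntegral.intervalIntegrable_rpow (Or.inr hzero)
    rw [intervalIntegrable_iff_integrableOn_Ioc_of_le hs1] at hint0
    have hint1 : IntegrableOn (fun t : ℝ => (1/2) * t ^ (-r)) (Ioc s 1) :=
      hint0.const_mul _
    have hmono := setIntegral_mono_on hint1
      ((g_integrable hp (by linarith) hs).mono_set Ioc_subset_Ioi_self)
      measurableSet_Ioc hpt
    have hcomp : (∫ t in Ioc s 1, (1/2) * t ^ (-r)) = (s ^ (1-r) - 1) / (2*(r-1)) := by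
      rw [← intervalIntegral.integral_of_le hs1, intervalIntegral.integral_const_mul,
        integral_rpow]
      · rw [show -r + 1 = 1 - r by ring, Real.one_rpow]
        have hr1 : (1:ℝ) - r ≠ 0 := by intro h; linarith
        have hr2 : 2*(r - 1) ≠ 0 := by intro h; nlinarith
        have hr3 : r - 1 ≠ 0 := by intro h; linarith
        field_simp
        ring
      · right
        refine ⟨by intro h; linarith, ?_⟩
        intro h
        rw [mem_uIcc] at h
        rcases h with h | h
        · exact absurd h.1 (not_le.2 hs)
        · linarith [h.2]
    linarith [hmono, hcomp.symm.le]
  linarith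

lemma F_exists_small (hp : 1 < p) (hr : 0 < r)
    (hF : ∀ s : ℝ, F s = ∫ t in Set.Ioi s, (t ^ p + t ^ r)⁻¹)
    {y : ℝ} (hy : 0 < y) : ∃ s₁ : ℝ, 1 ≤ s₁ ∧ F s₁ < y := by
  set B := 2/((p-1)*y) with hB
  have hBpos : 0 < B := by
    rw [hB]
    have : (0:ℝ) < (p-1)*y := by nlinarith
    positivity
  refine ⟨max 1 (B ^ (1/(p-1))), le_max_left _ _, ?_⟩
  set s₁ := max 1 (B ^ (1/(p-1))) with hs₁
  have hs₁pos : 0 < s₁ := lt_of_lt_of_le one_pos (le_max_left _ _)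
  have h1 : B ≤ s₁ ^ (p-1) :=
    rpow_helper hBpos.le (by linarith) (le_max_right _ _)
  have h2 : s₁ ^ (1-p) ≤ B⁻¹ := by
    rw [show (1:ℝ)-p = -(p-1) by ring, Real.rpow_neg hs₁pos.le]
    exact inv_anti₀ hBpos h1
  have h3 : B⁻¹ = (p-1)*y/2 := by
    rw [hB]; field_simp
  have h4 : s₁ ^ (1-p) ≤ (p-1)*y/2 := h3 ▸ h2
  have h5 : F s₁ ≤ s₁ ^ (1-p)/(p-1) := F_ub0 hp hr hF hs₁pos
  have h6 : s₁ ^ (1-p)/(p-1) < y := by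
    rw [div_lt_iff₀ (by linarith : (0:ℝ) < p-1)]
    nlinarith
  linarith

lemma F_bijOn (hp : 1 < p) (hr : 1 < r) (hrp : r < p)
    (hF : ∀ s : ℝ, F s = ∫ t in Set.Ioi s, (t ^ p + t ^ r)⁻¹) :
    BijOn F (Ioi 0) (Ioi 0) := by
  refine ⟨fun s hs => F_pos hp (by linarith) hF hs, (F_anti hp (by linarith) hF).injOn, ?_⟩
  intro y hy
  have hy' : (0:ℝ) < y := hy
  obtain ⟨s₁, hs₁1, hs₁y⟩ := F_exists_small hp (by linarith) hF hy'
  -- small point with large F value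
  set M := 2*(r-1)*y + 1 with hM
  have hMpos : (0:ℝ) < M := by nlinarith
  set s₂ := min (1/2) (M ^ (1/(1-r))) with hs₂
  have hs₂pos : 0 < s₂ := lt_min (by norm_num) (Real.rpow_pos_of_pos hMpos _)
  have hs₂1 : s₂ ≤ 1 := le_trans (min_le_left _ _) (by norm_num)
  have hs₂s₁ : s₂ ≤ s₁ := le_trans hs₂1 hs₁1
  have hMx : M ≤ s₂ ^ (1-r) := by
    have h1 : (M ^ (1/(1-r))) ^ (1-r) ≤ s₂ ^ (1-r) :=
      Real.rpow_le_rpow_of_nonpos hs₂pos (min_le_right _ _) (by linarith)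
    calc M = (M ^ (1/(1-r))) ^ (1-r) := by
          rw [← Real.rpow_mul hMpos.le, one_div, inv_mul_cancel₀ (by intro h; linarith : (1:ℝ)-r ≠ 0), Real.rpow_one]
      _ ≤ s₂ ^ (1-r) := h1
  have hyF2 : y ≤ F s₂ := by
    have := F_lb_small hp hr hrp hF hs₂pos hs₂1
    have h2 : y ≤ (s₂ ^ (1-r) - 1)/(2*(r-1)) := by
      rw [le_div_iff₀ (by nlinarith : (0:ℝ) < 2*(r-1))]
      nlinarith
    linarith
  have hsub : Icc s₂ s₁ ⊆ Ioi 0 := fun t ht => lt_of_lt_of_le hs₂pos ht.1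
  have hcont : ContinuousOn F (Icc s₂ s₁) := (F_contOn hp (by linarith) hF).mono hsub
  have hivt := intermediate_value_Icc' hs₂s₁ hcont
  have hymem : y ∈ Icc (F s₁) (F s₂) := ⟨hs₁y.le, hyF2⟩
  obtain ⟨x, hx, hxy⟩ := hivt hymem
  exact ⟨x, hsub hx, hxy⟩

lemma key (hp : 1 < p) (hr : 1 < r) (hrp : r < p)
    (hF : ∀ s : ℝ, F s = ∫ t in Set.Ioi s, (t ^ p + t ^ r)⁻¹) :
    ∃ C s₀ : ℝ, 0 < C ∧ 1 ≤ s₀ ∧ ∀ s : ℝ, s₀ ≤ s →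
      |s - ((p-1) * F s) ^ (-(1/(p-1))) + (1/(2*p-r-1)) * ((p-1) * F s) ^ ((p-r-1)/(p-1))|
        ≤ C * (F s) ^ ((2*(p-r)-1)/(p-1)) := by
  have hp1 : (0:ℝ) < p - 1 := by linarith
  have h2pr : (0:ℝ) < 2*p - r - 1 := by linarith
  have h3p2r : (0:ℝ) < 3*p - 2*r - 1 := by linarith
  have hpr : (0:ℝ) < p - r := by linarith
  obtain ⟨q₁, hq₁⟩ : ∃ y : ℝ, y = -(1/(p-1)) := ⟨_, rfl⟩
  obtain ⟨q₂, hq₂⟩ : ∃ y : ℝ, y = (p-r-1)/(p-1) := ⟨_, rfl⟩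
  obtain ⟨β, hβ⟩ : ∃ y : ℝ, y = (2*(p-r)-1)/(p-1) := ⟨_, rfl⟩
  obtain ⟨K₁, hK₁, hK₁b⟩ := taylor2 q₁
  obtain ⟨K₃, hK₃, hK₃b⟩ := taylor1 q₂
  obtain ⟨a, ha⟩ : ∃ y : ℝ, y = 1/(2*p-r-1) := ⟨_, rfl⟩
  obtain ⟨b, hb⟩ : ∃ y : ℝ, y = (p-1)/(3*p-2*r-1) := ⟨_, rfl⟩
  have hapos : 0 < a := by rw [ha]; positivity
  have hbpos : 0 < b := by rw [hb]; positivity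
  have hpa1 : (p-1)*a < 1 := by
    rw [ha, mul_one_div, div_lt_one h2pr]; linarith
  obtain ⟨c₁, hc₁⟩ : ∃ y : ℝ, y = (p-1)*a + b := ⟨_, rfl⟩
  have hc₁pos : 0 < c₁ := by rw [hc₁]; positivity
  obtain ⟨c₂, hc₂⟩ : ∃ y : ℝ, y = 1/(p-1) - a := ⟨_, rfl⟩
  have hc₂pos : 0 < c₂ := by
    rw [hc₂, ha, sub_pos, div_lt_div_iff₀ h2pr hp1]; linarith
  obtain ⟨c₃, hc₃⟩ : ∃ y : ℝ, y = 1/(p-1) := ⟨_, rfl⟩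
  have hc₃pos : 0 < c₃ := by rw [hc₃]; positivity
  obtain ⟨m, hm⟩ : ∃ y : ℝ, y = min (c₂ ^ β) (c₃ ^ β) := ⟨_, rfl⟩
  have hmpos : 0 < m := by
    rw [hm]
    exact lt_min (Real.rpow_pos_of_pos hc₂pos _) (Real.rpow_pos_of_pos hc₃pos _)
  obtain ⟨K₂, hK₂⟩ : ∃ y : ℝ, y = K₁*c₁^2 + b/(p-1) := ⟨_, rfl⟩
  obtain ⟨K₄, hK₄⟩ : ∃ y : ℝ, y = K₂ + a*K₃*c₁ := ⟨_, rfl⟩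
  obtain ⟨C, hC⟩ : ∃ y : ℝ, y = (K₄+1)/m := ⟨_, rfl⟩
  have hK₂pos : 0 < K₂ := by rw [hK₂]; positivity
  have hK₄pos : 0 < K₄ := by rw [hK₄]; nlinarith [mul_pos (mul_pos hapos hK₃) hc₁pos]
  have hCpos : 0 < C := by rw [hC]; positivity
  refine ⟨C, max 1 ((2*c₁+2) ^ (1/(p-r))), hCpos, le_max_left _ _, fun s hs => ?_⟩
  rw [← hq₁, ← hq₂, ← hβ, ← ha]
  have hs1 : (1:ℝ) ≤ s := le_trans (le_max_left _ _) hs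
  have hs0 : (0:ℝ) < s := by linarith
  obtain ⟨x, hx⟩ : ∃ y : ℝ, y = s ^ (r-p) := ⟨_, rfl⟩
  have hxpos : 0 < x := by rw [hx]; exact Real.rpow_pos_of_pos hs0 _
  have hx1 : x ≤ 1 := by rw [hx]; exact Real.rpow_le_one_of_one_le_of_nonpos hs1 (by linarith)
  have hxsmall : x ≤ 1/(2*c₁+2) := by
    have h1 : 2*c₁+2 ≤ s ^ (p-r) :=
      rpow_helper (by positivity) hpr (le_trans (le_max_right _ _) hs)
    rw [hx, show r-p = -(p-r) by ring, Real.rpow_neg hs0.le, one_div]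
    exact inv_anti₀ (by positivity) h1
  have hc₁x : c₁ * x ≤ 1/2 := by
    have := mul_le_mul_of_nonneg_left hxsmall hc₁pos.le
    rw [mul_one_div] at this
    have h2 : c₁/(2*c₁+2) ≤ 1/2 := by
      rw [div_le_div_iff₀ (by positivity) (by norm_num)]; linarith
    linarith
  obtain ⟨L, hL⟩ : ∃ y : ℝ, y = s ^ (1-p) := ⟨_, rfl⟩
  have hLpos : 0 < L := by rw [hL]; exact Real.rpow_pos_of_pos hs0 _
  -- power rewrites
  have hLx : s ^ (1+r-2*p) = L * x := by
    rw [hL, hx, ← Real.rpow_add hs0]; congr 1; ring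
  have hLx2 : s ^ (1+2*r-3*p) = L * x^2 := by
    rw [hL, hx, sq, ← Real.rpow_add hs0, ← Real.rpow_add hs0]; congr 1; ring
  have hsx : s * x = s ^ (1+r-p) := by
    nth_rewrite 1 [show s = s ^ (1:ℝ) by rw [Real.rpow_one]]
    rw [hx, ← Real.rpow_add hs0]
    congr 1
    ring
  -- F bounds in x form
  have hflb : L/(p-1) - a*(L*x) ≤ F s := by
    have := F_lb hp (by linarith) hrp hF hs0
    rw [hLx, ← hL] at this
    rw [ha]
    calc L/(p-1) - 1/(2*p-r-1)*(L*x) = L/(p-1) - (L*x)/(2*p-r-1) := by ring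
      _ ≤ F s := this
  have hfub : F s ≤ L/(p-1) - a*(L*x) + (1/(3*p-2*r-1))*(L*x^2) := by
    have := F_ub hp (by linarith) hrp hF hs0
    rw [hLx, hLx2, ← hL] at this
    rw [ha]
    calc F s ≤ L/(p-1) - (L*x)/(2*p-r-1) + (L*x^2)/(3*p-2*r-1) := this
      _ = L/(p-1) - 1/(2*p-r-1)*(L*x) + 1/(3*p-2*r-1)*(L*x^2) := by ring
  have hfub0 : F s ≤ c₃ * L := by
    have h := F_ub0 hp (by linarith) hF hs0
    rw [← hL] at h
    rw [hc₃, one_div, inv_mul_eq_div]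
    exact h
  have hflb0 : c₂ * L ≤ F s := by
    have h1 : a*(L*x) ≤ a*L :=
      mul_le_mul_of_nonneg_left (mul_le_of_le_one_right hLpos.le hx1) hapos.le
    calc c₂ * L = L/(p-1) - a*L := by rw [hc₂]; ring
      _ ≤ L/(p-1) - a*(L*x) := by linarith
      _ ≤ F s := hflb
  have hFpos : 0 < F s := F_pos hp (by linarith) hF hs0
  -- epsilon
  obtain ⟨ε, hε⟩ : ∃ y : ℝ, y = (p-1) * s^(p-1) * F s - 1 := ⟨_, rfl⟩
  have hsL : s^(p-1) * L = 1 := by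
    rw [hL, ← Real.rpow_add hs0, show p-1+(1-p) = 0 by ring, Real.rpow_zero]
  have hFs_eq : (p-1) * F s = L * (1+ε) := by
    have h1 : L * (1+ε) = (p-1) * F s * (s^(p-1) * L) := by rw [hε]; ring
    rw [h1, hsL, mul_one]
  -- epsilon bounds
  have hε_lb : -((p-1)*a*x) ≤ ε := by
    have h1 : L * (1 - (p-1)*a*x) ≤ L * (1+ε) := by
      rw [← hFs_eq]
      calc L * (1 - (p-1)*a*x) = (p-1) * (L/(p-1) - a*(L*x)) := by field_simp
        _ ≤ (p-1) * F s := mul_le_mul_of_nonneg_left hflb hp1.le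
    have := (mul_le_mul_iff_right₀ hLpos).mp h1
    linarith
  have hε_ub : ε ≤ -((p-1)*a*x) + b*x^2 := by
    have h1 : L * (1+ε) ≤ L * (1 - (p-1)*a*x + b*x^2) := by
      rw [← hFs_eq]
      calc (p-1) * F s ≤ (p-1) * (L/(p-1) - a*(L*x) + (1/(3*p-2*r-1))*(L*x^2)) :=
            mul_le_mul_of_nonneg_left hfub hp1.le
        _ = L * (1 - (p-1)*a*x + b*x^2) := by rw [hb]; field_simp
    have := (mul_le_mul_iff_right₀ hLpos).mp h1
    linarith
  have hx2x : x^2 ≤ x := by rw [sq]; exact mul_le_of_le_one_right hxpos.le hx1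
  have habs_ε : |ε| ≤ c₁ * x := by
    rw [abs_le]
    constructor
    · rw [hc₁]
      have hbx : (0:ℝ) ≤ b*x := (mul_pos hbpos hxpos).le
      have : -(((p-1)*a+b)*x) = -((p-1)*a*x) - b*x := by ring
      rw [this]
      linarith only [hε_lb, hbx]
    · rw [hc₁]
      have hbx2 : b*x^2 ≤ b*x := mul_le_mul_of_nonneg_left hx2x hbpos.le
      have hpax : (0:ℝ) ≤ (p-1)*a*x := (mul_pos (mul_pos hp1 hapos) hxpos).le
      have : ((p-1)*a+b)*x = (p-1)*a*x + b*x := by ring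
      rw [this]
      linarith only [hε_ub, hbx2, hpax]
  have habs_half : |ε| ≤ 1/2 := le_trans habs_ε hc₁x
  have hδ : |ε + (p-1)*a*x| ≤ b*x^2 := by
    rw [abs_le]
    constructor
    · have hbx2 : (0:ℝ) ≤ b*x^2 := (mul_pos hbpos (pow_pos hxpos 2)).le
      linarith only [hε_lb, hbx2]
    · linarith only [hε_ub]
  have h1ε : (0:ℝ) < 1 + ε := by
    rw [abs_le] at habs_half; linarith [habs_half.1]
  -- A term
  have hq₁1 : (1-p)*q₁ = 1 := by rw [hq₁]; field_simp; ring
  have hA : ((p-1) * F s) ^ q₁ = s * (1+ε) ^ q₁ := by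
    rw [hFs_eq, Real.mul_rpow hLpos.le h1ε.le, hL, ← Real.rpow_mul hs0.le, hq₁1,
      Real.rpow_one]
  have htayA := hK₁b ε habs_half
  have hε2 : ε^2 ≤ (c₁*x)^2 := by
    rw [← sq_abs ε]
    exact pow_le_pow_left₀ (abs_nonneg _) habs_ε 2
  have hAdiff : |((p-1)*F s)^q₁ - s - s*(q₁*ε)| ≤ K₁*c₁^2*(s*x^2) := by
    have h1 : ((p-1)*F s)^q₁ - s - s*(q₁*ε) = s * ((1+ε)^q₁ - 1 - q₁*ε) := by
      rw [hA]; ring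
    rw [h1, abs_mul, abs_of_pos hs0]
    calc s * |(1+ε)^q₁ - 1 - q₁*ε| ≤ s * (K₁ * ε^2) :=
          mul_le_mul_of_nonneg_left htayA hs0.le
      _ ≤ s * (K₁ * (c₁*x)^2) :=
          mul_le_mul_of_nonneg_left (mul_le_mul_of_nonneg_left hε2 hK₁.le) hs0.le
      _ = K₁*c₁^2*(s*x^2) := by ring
  have hstep1 : |s - ((p-1)*F s)^q₁ + a*(s*x)| ≤ K₂*(s*x^2) := by
    have hid : s - ((p-1)*F s)^q₁ + a*(s*x) =
        -(((p-1)*F s)^q₁ - s - s*(q₁*ε)) + (s/(p-1))*(ε + (p-1)*a*x) := by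
      rw [hq₁]; field_simp; ring
    rw [hid]
    have h2 : |(s/(p-1))*(ε + (p-1)*a*x)| ≤ (s/(p-1))*(b*x^2) := by
      rw [abs_mul, abs_of_pos (by positivity : (0:ℝ) < s/(p-1))]
      exact mul_le_mul_of_nonneg_left hδ (by positivity)
    calc |-(((p-1)*F s)^q₁ - s - s*(q₁*ε)) + (s/(p-1))*(ε + (p-1)*a*x)|
        ≤ |-(((p-1)*F s)^q₁ - s - s*(q₁*ε))| + |(s/(p-1))*(ε + (p-1)*a*x)| := abs_add_le _ _
      _ ≤ K₁*c₁^2*(s*x^2) + (s/(p-1))*(b*x^2) := by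
          rw [abs_neg]; exact add_le_add hAdiff h2
      _ = K₂*(s*x^2) := by rw [hK₂]; field_simp
  -- B term
  have hq₂1 : (1-p)*q₂ = 1+r-p := by rw [hq₂]; field_simp; ring
  have hB : ((p-1) * F s) ^ q₂ = (s*x) * (1+ε) ^ q₂ := by
    rw [hFs_eq, Real.mul_rpow hLpos.le h1ε.le, hL, ← Real.rpow_mul hs0.le, hq₂1, ← hsx]
  have htayB := hK₃b ε habs_half
  have hBdiff : |a*((p-1)*F s)^q₂ - a*(s*x)| ≤ a*K₃*c₁*(s*x^2) := by
    have h1 : a*((p-1)*F s)^q₂ - a*(s*x) = a*(s*x)*((1+ε)^q₂ - 1) := by rw [hB]; ring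
    rw [h1, abs_mul, abs_of_pos (by positivity : (0:ℝ) < a*(s*x))]
    calc a*(s*x) * |(1+ε)^q₂ - 1| ≤ a*(s*x) * (K₃ * |ε|) :=
          mul_le_mul_of_nonneg_left htayB (by positivity)
      _ ≤ a*(s*x) * (K₃ * (c₁*x)) :=
          mul_le_mul_of_nonneg_left (mul_le_mul_of_nonneg_left habs_ε hK₃.le)
            (by positivity)
      _ = a*K₃*c₁*(s*x^2) := by ring
  -- combine
  have hmain : |s - ((p-1)*F s)^q₁ + a*((p-1)*F s)^q₂| ≤ K₄*(s*x^2) := by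
    have hid : s - ((p-1)*F s)^q₁ + a*((p-1)*F s)^q₂ =
        (s - ((p-1)*F s)^q₁ + a*(s*x)) + (a*((p-1)*F s)^q₂ - a*(s*x)) := by ring
    rw [hid]
    calc |(s - ((p-1)*F s)^q₁ + a*(s*x)) + (a*((p-1)*F s)^q₂ - a*(s*x))|
        ≤ |s - ((p-1)*F s)^q₁ + a*(s*x)| + |a*((p-1)*F s)^q₂ - a*(s*x)| := abs_add_le _ _
      _ ≤ K₂*(s*x^2) + a*K₃*c₁*(s*x^2) := add_le_add hstep1 hBdiff
      _ = K₄*(s*x^2) := by rw [hK₄]; ring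
  -- lower bound on (F s)^β
  have hsx2 : s * x^2 = s ^ ((1-p)*β) := by
    rw [hx, sq]
    nth_rewrite 1 [show s = s^(1:ℝ) by rw [Real.rpow_one]]
    rw [← Real.rpow_add hs0, ← Real.rpow_add hs0]
    congr 1
    rw [hβ]; field_simp; ring
  have hLβ : L ^ β = s*x^2 := by
    rw [hL, ← Real.rpow_mul hs0.le, ← hsx2]
  have hpow : m * (s*x^2) ≤ (F s) ^ β := by
    have hLβpos : (0:ℝ) < s*x^2 := by positivity
    rcases le_or_gt 0 β with hβ0 | hβ0
    · have h1 : (c₂*L)^β ≤ (F s)^β := Real.rpow_le_rpow (by positivity) hflb0 hβ0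
      have h2 : (c₂*L)^β = c₂^β * (s*x^2) := by
        rw [Real.mul_rpow hc₂pos.le hLpos.le, hLβ]
      have h3 : m ≤ c₂^β := by rw [hm]; exact min_le_left _ _
      calc m*(s*x^2) ≤ c₂^β*(s*x^2) := mul_le_mul_of_nonneg_right h3 hLβpos.le
        _ = (c₂*L)^β := h2.symm
        _ ≤ (F s)^β := h1
    · have h1 : (c₃*L)^β ≤ (F s)^β := Real.rpow_le_rpow_of_nonpos hFpos hfub0 hβ0.le
      have h2 : (c₃*L)^β = c₃^β * (s*x^2) := by
        rw [Real.mul_rpow hc₃pos.le hLpos.le, hLβ]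
      have h3 : m ≤ c₃^β := by rw [hm]; exact min_le_right _ _
      calc m*(s*x^2) ≤ c₃^β*(s*x^2) := mul_le_mul_of_nonneg_right h3 hLβpos.le
        _ = (c₃*L)^β := h2.symm
        _ ≤ (F s)^β := h1
  have hCm : C*m = K₄+1 := by rw [hC, div_mul_cancel₀ _ hmpos.ne']
  calc |s - ((p-1)*F s)^q₁ + a*((p-1)*F s)^q₂|
      ≤ K₄*(s*x^2) := hmain
    _ ≤ (K₄+1)*(s*x^2) := mul_le_mul_of_nonneg_right (by linarith) (by positivity)
    _ = C*(m*(s*x^2)) := by rw [← hCm]; ring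
    _ ≤ C*((F s)^β) := mul_le_mul_of_nonneg_left hpow hCpos.le

end AuxFinv

/-- for `p > 1`, `1 < r < p`, the function
`F(s) = ∫_s^∞ dt/(t^p + t^r)` is a strictly decreasing continuous bijection
from `(0,∞)` onto `(0,∞)`, and its inverse `F⁻¹` satisfies, as `σ → 0+`,
`F⁻¹(σ) = ((p−1)σ)^{−1/(p−1)} − (1/(2p−r−1))((p−1)σ)^{(p−r−1)/(p−1)}
  + O(σ^{(2(p−r)−1)/(p−1)})`. -/
theorem Finv_expansion (p r : ℝ) (hp : 1 < p) (hr : 1 < r) (hrp : r < p)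
    (F : ℝ → ℝ)
    (hF : ∀ s : ℝ, F s = ∫ t in Set.Ioi s, (t ^ p + t ^ r)⁻¹) :
    StrictAntiOn F (Set.Ioi 0) ∧
    ContinuousOn F (Set.Ioi 0) ∧
    Set.BijOn F (Set.Ioi 0) (Set.Ioi 0) ∧
    ∃ C : ℝ, 0 < C ∧ ∀ᶠ σ in nhdsWithin 0 (Set.Ioi 0),
      |Function.invFunOn F (Set.Ioi 0) σ - ((p - 1) * σ) ^ (-(1 / (p - 1)))
          + (1 / (2 * p - r - 1)) * ((p - 1) * σ) ^ ((p - r - 1) / (p - 1))| ≤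
        C * σ ^ ((2 * (p - r) - 1) / (p - 1)) := by
  have hanti := F_anti hp (by linarith) hF
  have hcont := F_contOn hp (by linarith) hF
  have hbij := F_bijOn hp hr hrp hF
  obtain ⟨C, s₀, hC, hs₀1, hkey⟩ := key hp hr hrp hF
  refine ⟨hanti, hcont, hbij, C, hC, ?_⟩
  have hs₀pos : (0:ℝ) < s₀ := by linarith
  have hσ₀ : 0 < F s₀ := F_pos hp (by linarith) hF hs₀pos
  filter_upwards [Ioo_mem_nhdsGT_of_mem (⟨le_refl 0, hσ₀⟩ : (0:ℝ) ∈ Ico 0 (F s₀))] with σ hσ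
  have hσpos : 0 < σ := hσ.1
  obtain ⟨w, hw, hweq⟩ := hbij.surjOn (mem_Ioi.mpr hσpos)
  have hex : ∃ s ∈ Ioi (0:ℝ), F s = σ := ⟨w, hw, hweq⟩
  have htmem : Function.invFunOn F (Ioi 0) σ ∈ Ioi 0 := Function.invFunOn_mem hex
  have hteq : F (Function.invFunOn F (Ioi 0) σ) = σ := Function.invFunOn_eq hex
  have hts₀ : s₀ ≤ Function.invFunOn F (Ioi 0) σ := by
    by_contra h
    push_neg at h
    have h2 := hanti htmem (mem_Ioi.mpr hs₀pos) h
    rw [hteq] at h2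
    exact absurd hσ.2 (not_lt.2 h2.le)
  have hfin := hkey _ hts₀
  rw [hteq] at hfin
  have heq1 : p - 1 = p - 1 := rfl
  convert hfin using 3 <;> ring_nf
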